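/- Let L = pq where q = 2(w-1)f + 1 and w ≤ p ≤ 2(w-1) are primes, and suppose there exists a subgroup H ≤ (Z_L)^× with -1 ∈ H, |H| = (p-1)(q-1)/(w-1), such that {1, 2, ..., w-1} is a system of distinct representatives for the cosets of H in (Z_L)^×; and similarly a subgroup N ≤ Z_q* with -1 ∈ N, |N| = (q-1)/(w-1), and {1,...,w-1} an SDR of its cosets. Then there is an equi-difference conflict-avoiding code of length L and weight w of size pf + 1 whose difference sets partition Z_L \ {0}. -/

import Mathlib

lemma exists_half_finset {α : Type*} [DecidableEq α] (g : α → α) (hg : ∀ x, g (g x) = x) :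
    ∀ A : Finset α, (∀ x ∈ A, g x ∈ A) → (∀ x ∈ A, g x ≠ x) →
    ∃ S : Finset α, S ⊆ A ∧ (∀ x ∈ A, x ∈ S ∨ g x ∈ S) ∧ (∀ x ∈ S, g x ∉ S) ∧
      A.card = 2 * S.card := by
  intro A
  induction A using Finset.strongInduction with
  | _ A ih =>
    intro hA hno
    rcases A.eq_empty_or_nonempty with rfl | ⟨a, ha⟩
    · exact ⟨∅, by simp⟩
    · have hga : g a ∈ A := hA a ha
      have hgane : g a ≠ a := hno a ha
      set B := A \ {a, g a} with hB
      have hBA : B ⊂ A :=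
        Finset.ssubset_iff_of_subset (Finset.sdiff_subset) |>.mpr ⟨a, ha, by simp [hB]⟩
      obtain ⟨S, hS1, hS2, hS3, hS4⟩ := ih B hBA
        (by
          intro x hx
          simp only [hB, Finset.mem_sdiff, Finset.mem_insert, Finset.mem_singleton] at hx ⊢
          obtain ⟨hxA, hx2⟩ := hx
          push_neg at hx2
          refine ⟨hA x hxA, ?_⟩
          rintro (h | h)
          · exact hx2.2 (by rw [← h, hg])
          · exact hx2.1 (by have := congrArg g h; rwa [hg, hg] at this))
        (by
          intro x hx
          exact hno x (Finset.mem_sdiff.mp hx).1)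
      have haB : a ∉ B := by simp [hB]
      have hgaB : g a ∉ B := by simp [hB]
      have haS : a ∉ S := fun h => haB (hS1 h)
      refine ⟨insert a S, ?_, ?_, ?_, ?_⟩
      · intro x hx
        rcases Finset.mem_insert.mp hx with rfl | hx
        · exact ha
        · exact Finset.sdiff_subset (hS1 hx)
      · intro x hx
        by_cases h1 : x = a
        · subst h1; exact Or.inl (Finset.mem_insert_self _ _)
        by_cases h2 : x = g a
        · subst h2; right; rw [hg]; exact Finset.mem_insert_self _ _
        · rcases hS2 x (by simp [hB, hx, h1, h2]) with h | h
          · exact Or.inl (Finset.mem_insert_of_mem h)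
          · exact Or.inr (Finset.mem_insert_of_mem h)
      · intro x hx
        rcases Finset.mem_insert.mp hx with rfl | hx
        · intro hcon
          rcases Finset.mem_insert.mp hcon with h | h
          · exact hgane h
          · exact hgaB (hS1 h)
        · intro hcon
          rcases Finset.mem_insert.mp hcon with h | h
          · have : x = g a := by rw [← hg x, h]
            exact hgaB (hS1 (this ▸ hx))
          · exact hS3 x hx h
      · have hsub : {a, g a} ⊆ A := by
          intro x hx
          rcases Finset.mem_insert.mp hx with rfl | hx
          · exact ha
          · exact (Finset.mem_singleton.mp hx) ▸ hga
        have hcard2 : ({a, g a} : Finset α).card = 2 := by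
          rw [Finset.card_insert_of_notMem (by simp [Ne.symm hgane]), Finset.card_singleton]
        have hcardB : B.card = A.card - 2 := by
          rw [hB, Finset.card_sdiff_of_subset hsub, hcard2]
        have h2A : 2 ≤ A.card := hcard2 ▸ Finset.card_le_card hsub
        rw [Finset.card_insert_of_notMem haS]
        omega

lemma sdr_cancel {M w : ℕ} (G : Subgroup (ZMod M)ˣ)
    (hSDR : ∀ u : (ZMod M)ˣ, ∃! j : ℕ, 1 ≤ j ∧ j ≤ w - 1 ∧
      ∃ h ∈ G, (u : ZMod M) = (j : ZMod M) * ((h : (ZMod M)ˣ) : ZMod M))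
    {k k' : ℕ} (hk1 : 1 ≤ k) (hk2 : k ≤ w - 1) (hk1' : 1 ≤ k') (hk2' : k' ≤ w - 1)
    (hku : IsUnit (k : ZMod M)) {h h' : (ZMod M)ˣ} (hh : h ∈ G) (hh' : h' ∈ G)
    (heq : (k : ZMod M) * h = (k' : ZMod M) * h') : k = k' ∧ h = h' := by
  set u : (ZMod M)ˣ := hku.unit * h with hu
  have hcu : (u : ZMod M) = (k : ZMod M) * h := by
    rw [hu, Units.val_mul, hku.unit_spec]
  obtain ⟨j, _, hjun⟩ := hSDR u
  have e1 : k = j := hjun k ⟨hk1, hk2, h, hh, hcu⟩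
  have e2 : k' = j := hjun k' ⟨hk1', hk2', h', hh', by rw [hcu, heq]⟩
  have hkk : k = k' := by rw [e1, e2]
  refine ⟨hkk, ?_⟩
  have : (k : ZMod M) * h = (k : ZMod M) * h' := by rw [heq, hkk]
  exact Units.ext (hku.mul_left_cancel this)

lemma sdr_main {M w : ℕ} (G : Subgroup (ZMod M)ˣ) (hG1 : (-1 : (ZMod M)ˣ) ∈ G)
    (hSDR : ∀ u : (ZMod M)ˣ, ∃! j : ℕ, 1 ≤ j ∧ j ≤ w - 1 ∧
      ∃ h ∈ G, (u : ZMod M) = (j : ZMod M) * ((h : (ZMod M)ˣ) : ZMod M))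
    {k k' : ℕ} (hk1 : 1 ≤ k) (hk2 : k ≤ w - 1) (hk1' : 1 ≤ k') (hk2' : k' ≤ w - 1)
    (hku : IsUnit (k : ZMod M)) {h h' : (ZMod M)ˣ} (hh : h ∈ G) (hh' : h' ∈ G)
    (hneg : h' ≠ -h)
    (heq : (k : ZMod M) * h = (k' : ZMod M) * h' ∨
      (k : ZMod M) * h = -((k' : ZMod M) * h')) : k = k' ∧ h = h' := by
  rcases heq with heq | heq
  · exact sdr_cancel G hSDR hk1 hk2 hk1' hk2' hku hh hh' heq
  · have hmem : -h' ∈ G := by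
      have := G.mul_mem hG1 hh'
      rwa [neg_one_mul] at this
    have heq2 : (k : ZMod M) * h = (k' : ZMod M) * ((-h' : (ZMod M)ˣ) : ZMod M) := by
      rw [Units.val_neg, mul_neg, heq]
    obtain ⟨hkk, hhh⟩ := sdr_cancel G hSDR hk1 hk2 hk1' hk2' hku hh hmem heq2
    exact absurd (by rw [hhh, neg_neg]) hneg




/-- The difference set `d*(I) = {x - y : x, y ∈ I, x ≠ y}` of a subset of `Z_L`. -/
def dstar {L : ℕ} (I : Finset (ZMod L)) : Finset (ZMod L) :=
  ((I ×ˢ I).filter fun p => p.1 ≠ p.2).image fun p => p.1 - p.2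

/-- Let `L = pq` with `q = 2(w-1)f + 1` and `w ≤ p ≤ 2(w-1)` primes. Suppose there is a
subgroup `H` of `(Z_L)ˣ` with `-1 ∈ H`, `|H| = (p-1)(q-1)/(w-1)`, for which `{1,...,w-1}`
is an SDR of the cosets of `H`, and a subgroup `N` of `(Z_q)ˣ` with `-1 ∈ N`,
`|N| = (q-1)/(w-1)`, for which `{1,...,w-1}` is an SDR of the cosets of `N`. Then there
exists an equi-difference conflict-avoiding code of length `L = pq` and weight `w` with
`pf + 1` codewords whose difference sets partition `Z_L \ {0}`. -/
theorem stmt14 (p q w f : ℕ) (hp : p.Prime) (hq : q.Prime) (hpq : p ≠ q)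
    (hw : 2 ≤ w) (hwp : w ≤ p) (hpw : p ≤ 2 * (w - 1)) (hqf : q = 2 * (w - 1) * f + 1)
    [NeZero (p * q)] [Fact q.Prime]
    (H : Subgroup (ZMod (p * q))ˣ) (hH1 : (-1 : (ZMod (p * q))ˣ) ∈ H)
    (hHcard : Nat.card H = (p - 1) * (q - 1) / (w - 1))
    (hHSDR : ∀ u : (ZMod (p * q))ˣ, ∃! j : ℕ, 1 ≤ j ∧ j ≤ w - 1 ∧
      ∃ h ∈ H, (u : ZMod (p * q)) = (j : ZMod (p * q)) * ((h : (ZMod (p * q))ˣ) : ZMod (p * q)))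
    (N : Subgroup (ZMod q)ˣ) (hN1 : (-1 : (ZMod q)ˣ) ∈ N)
    (hNcard : Nat.card N = (q - 1) / (w - 1))
    (hNSDR : ∀ u : (ZMod q)ˣ, ∃! j : ℕ, 1 ≤ j ∧ j ≤ w - 1 ∧
      ∃ n ∈ N, (u : ZMod q) = (j : ZMod q) * ((n : (ZMod q)ˣ) : ZMod q)) :
    ∃ C : Finset (Finset (ZMod (p * q))),
      C.card = p * f + 1 ∧
      (∀ I ∈ C, I.card = w ∧ ∃ g : ZMod (p * q),
        I = (Finset.range w).image fun k : ℕ => (k : ZMod (p * q)) * g) ∧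
      (∀ I ∈ C, ∀ J ∈ C, I ≠ J → Disjoint (dstar I) (dstar J)) ∧
      C.biUnion dstar = Finset.univ \ {0} := by
  classical
  haveI fp : Fact p.Prime := ⟨hp⟩
  haveI : NeZero p := ⟨hp.pos.ne'⟩
  haveI : NeZero q := ⟨hq.pos.ne'⟩
  haveI f1L : Fact (1 < p * q) := ⟨by
    have h1 := hp.two_le; have h2 := hq.two_le; nlinarith⟩
  -- basic arithmetic
  have hw1 : 1 ≤ w - 1 := by omega
  have hf1 : 1 ≤ f := by
    rcases Nat.eq_zero_or_pos f with hf | hf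
    · exfalso; subst hf; rw [Nat.mul_zero] at hqf; have := hq.two_le; omega
    · exact hf
  have hq3 : 3 ≤ q := by
    have h1 : 1 * 1 ≤ (w - 1) * f := Nat.mul_le_mul hw1 hf1
    have h2 : 2 * (w - 1) * f = 2 * ((w - 1) * f) := by ring
    omega
  have hpltq : p < q := by
    have h1 : 2 * (w - 1) * 1 ≤ 2 * (w - 1) * f := Nat.mul_le_mul_left _ hf1
    omega
  have hp2 : 2 ≤ p := hp.two_le
  have hL6 : 6 ≤ p * q := by calc 6 = 2 * 3 := rfl
                                 _ ≤ p * q := Nat.mul_le_mul hp2 hq3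
  have hwpq : w ≤ p * q := le_trans hwp (Nat.le_mul_of_pos_right p (by omega))
  have hcop : Nat.Coprime p q := (Nat.coprime_primes hp hq).mpr hpq
  -- projections
  set πp : ZMod (p * q) →+* ZMod p := ZMod.castHom (dvd_mul_right p q) (ZMod p) with hπpdef
  set πq : ZMod (p * q) →+* ZMod q := ZMod.castHom (dvd_mul_left q p) (ZMod q) with hπqdef
  have hπp0 : ∀ x : ZMod (p * q), πp x = 0 ↔ p ∣ x.val := by
    intro x
    have h1 : πp x = ((x.val : ℕ) : ZMod p) := by
      conv_lhs => rw [← ZMod.natCast_zmod_val x]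
      exact map_natCast πp x.val
    rw [h1, ZMod.natCast_eq_zero_iff]
  have hπq0 : ∀ x : ZMod (p * q), πq x = 0 ↔ q ∣ x.val := by
    intro x
    have h1 : πq x = ((x.val : ℕ) : ZMod q) := by
      conv_lhs => rw [← ZMod.natCast_zmod_val x]
      exact map_natCast πq x.val
    rw [h1, ZMod.natCast_eq_zero_iff]
  have hzero : ∀ x : ZMod (p * q), πp x = 0 → πq x = 0 → x = 0 := by
    intro x h1 h2
    have h3 : p * q ∣ x.val := Nat.Coprime.mul_dvd_of_dvd_of_dvd hcop ((hπp0 x).mp h1) ((hπq0 x).mp h2)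
    have h4 : x.val < p * q := ZMod.val_lt x
    have h5 : x.val = 0 := Nat.eq_zero_of_dvd_of_lt h3 h4
    rw [← ZMod.natCast_zmod_val x, h5]; simp
  have hunit_of : ∀ x : ZMod (p * q), πp x ≠ 0 → πq x ≠ 0 → IsUnit x := by
    intro x h1 h2
    have hc1 : x.val.Coprime p := (Nat.Prime.coprime_iff_not_dvd hp).mpr ((hπp0 x).not.mp h1) |>.symm
    have hc2 : x.val.Coprime q := (Nat.Prime.coprime_iff_not_dvd hq).mpr ((hπq0 x).not.mp h2) |>.symm
    have := (ZMod.isUnit_iff_coprime x.val (p * q)).mpr (Nat.Coprime.mul_right hc1 hc2)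
    rwa [ZMod.natCast_zmod_val x] at this
  have hunit_to : ∀ x : ZMod (p * q), IsUnit x → πp x ≠ 0 ∧ πq x ≠ 0 :=
    fun x hx => ⟨(hx.map πp).ne_zero, (hx.map πq).ne_zero⟩
  -- small numbers are units
  have hknotp : ∀ k : ℕ, 1 ≤ k → k ≤ w - 1 → ¬ p ∣ k :=
    fun k h1 h2 hd => absurd (Nat.le_of_dvd (by omega) hd) (by omega)
  have hknotq : ∀ k : ℕ, 1 ≤ k → k ≤ w - 1 → ¬ q ∣ k :=
    fun k h1 h2 hd => absurd (Nat.le_of_dvd (by omega) hd) (by omega)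
  have hkunit : ∀ k : ℕ, 1 ≤ k → k ≤ w - 1 → IsUnit (k : ZMod (p * q)) := by
    intro k h1 h2
    refine (ZMod.isUnit_iff_coprime k (p * q)).mpr (Nat.Coprime.mul_right ?_ ?_)
    · exact ((Nat.Prime.coprime_iff_not_dvd hp).mpr (hknotp k h1 h2)).symm
    · exact ((Nat.Prime.coprime_iff_not_dvd hq).mpr (hknotq k h1 h2)).symm
  have hkunitq : ∀ k : ℕ, 1 ≤ k → k ≤ w - 1 → IsUnit (k : ZMod q) := by
    intro k h1 h2
    exact (ZMod.isUnit_iff_coprime k q).mpr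
      ((Nat.Prime.coprime_iff_not_dvd hq).mpr (hknotq k h1 h2)).symm
  have hkunitp : ∀ k : ℕ, 1 ≤ k → k ≤ w - 1 → (k : ZMod p) ≠ 0 := by
    intro k h1 h2
    rw [Ne, ZMod.natCast_eq_zero_iff]
    exact hknotp k h1 h2
  have hqp : (q : ZMod p) ≠ 0 := by
    rw [Ne, ZMod.natCast_eq_zero_iff]
    intro hd
    exact hpq ((Nat.prime_dvd_prime_iff_eq hp hq).mp hd)
  have hpq0 : (p : ZMod q) ≠ 0 := by
    rw [Ne, ZMod.natCast_eq_zero_iff]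
    intro hd
    exact hpq ((Nat.prime_dvd_prime_iff_eq hq hp).mp hd).symm
  -- cast injectivity
  have hcastinj : ∀ i j : ℕ, i < w → j < w → ((i : ZMod (p * q)) = j) → i = j := by
    intro i j hi hj h
    have := (ZMod.natCast_eq_natCast_iff' i j (p * q)).mp h
    rwa [Nat.mod_eq_of_lt (by omega), Nat.mod_eq_of_lt (by omega)] at this
  have hcastinjq : ∀ i j : ℕ, i < w → j < w → ((i : ZMod q) = j) → i = j := by
    intro i j hi hj h
    have := (ZMod.natCast_eq_natCast_iff' i j q).mp h
    rwa [Nat.mod_eq_of_lt (by omega), Nat.mod_eq_of_lt (by omega)] at this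
  have hcastinjp : ∀ i j : ℕ, i < w → j < w → ((i : ZMod p) = j) → i = j := by
    intro i j hi hj h
    have := (ZMod.natCast_eq_natCast_iff' i j p).mp h
    rwa [Nat.mod_eq_of_lt (by omega), Nat.mod_eq_of_lt (by omega)] at this
  -- the mod-q reduction for multiples of p
  have hmodq : ∀ A B : ℤ, (((p : ℤ) * A : ℤ) : ZMod (p * q)) = (((p : ℤ) * B : ℤ) : ZMod (p * q))
      ↔ ((A : ZMod q) = (B : ZMod q)) := by
    intro A B
    have h1 : ((((p : ℤ) * A : ℤ) : ZMod (p * q)) = (((p : ℤ) * B : ℤ) : ZMod (p * q)))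
        ↔ ((p * q : ℕ) : ℤ) ∣ ((p : ℤ) * A - (p : ℤ) * B) := by
      rw [← sub_eq_zero, ← Int.cast_sub, ZMod.intCast_zmod_eq_zero_iff_dvd]
    have h2 : (((p * q : ℕ) : ℤ) ∣ ((p : ℤ) * A - (p : ℤ) * B)) ↔ ((q : ℤ) ∣ (A - B)) := by
      have hc : ((p * q : ℕ) : ℤ) = (p : ℤ) * (q : ℤ) := by push_cast; ring
      rw [hc, ← mul_sub]
      exact mul_dvd_mul_iff_left (show (p : ℤ) ≠ 0 by exact_mod_cast hp.pos.ne')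
    have h3 : ((q : ℤ) ∣ (A - B)) ↔ ((A : ZMod q) = (B : ZMod q)) := by
      rw [← sub_eq_zero, ← Int.cast_sub, ZMod.intCast_zmod_eq_zero_iff_dvd]
    rw [h1, h2, h3]
  -- lift of a unit of ZMod q
  set mlift : (ZMod q)ˣ → ZMod (p * q) :=
    fun n => ((((n : (ZMod q)ˣ) : ZMod q).val : ℕ) : ZMod (p * q)) with hmldef
  have hπqml0 : ∀ n : (ZMod q)ˣ, πq (mlift n) = (n : ZMod q) := by
    intro n
    rw [hmldef]
    simp only [map_natCast]
    exact ZMod.natCast_zmod_val _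
  have hπqml : ∀ n : (ZMod q)ˣ, πq ((p : ZMod (p * q)) * mlift n)
      = (p : ZMod q) * (n : ZMod q) := by
    intro n
    rw [map_mul, map_natCast, hπqml0]
  have hπpml : ∀ n : (ZMod q)ˣ, πp ((p : ZMod (p * q)) * mlift n) = 0 := by
    intro n
    rw [map_mul, map_natCast, ZMod.natCast_self, zero_mul]
  -- injectivity of k ↦ k * g on range w, per generator type
  have hinj_unit : ∀ x : ZMod (p * q), IsUnit x →
      ∀ i j : ℕ, i < w → j < w → (i : ZMod (p * q)) * x = (j : ZMod (p * q)) * x → i = j := by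
    intro x hx i j hi hj h
    exact hcastinj i j hi hj (hx.mul_left_cancel (by rw [mul_comm x, mul_comm x]; exact h))
  have hpuq : IsUnit (p : ZMod q) := isUnit_iff_ne_zero.mpr hpq0
  have hinj_p : ∀ n : (ZMod q)ˣ, ∀ i j : ℕ, i < w → j < w →
      (i : ZMod (p * q)) * ((p : ZMod (p * q)) * mlift n)
        = (j : ZMod (p * q)) * ((p : ZMod (p * q)) * mlift n) → i = j := by
    intro n i j hi hj h
    have h2 := congrArg πq h
    simp only [map_mul, map_natCast, hπqml0] at h2
    have h3 : (p : ZMod q) * ((i : ZMod q) * (n : ZMod q))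
        = (p : ZMod q) * ((j : ZMod q) * (n : ZMod q)) := by
      rw [show (p:ZMod q) * ((i : ZMod q) * (n : ZMod q)) = (i:ZMod q) * ((p:ZMod q) * (n: ZMod q)) by ring,
        show (p:ZMod q) * ((j : ZMod q) * (n : ZMod q)) = (j:ZMod q) * ((p:ZMod q) * (n: ZMod q)) by ring]
      exact h2
    have h4 := hpuq.mul_left_cancel h3
    have h4' : (n : ZMod q) * (i : ZMod q) = (n : ZMod q) * (j : ZMod q) := by
      rw [mul_comm _ ((i : ZMod q)), mul_comm _ ((j : ZMod q))]; exact h4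
    exact hcastinjq i j hi hj (n.isUnit.mul_left_cancel h4')
  have hqup : IsUnit (q : ZMod p) := isUnit_iff_ne_zero.mpr hqp
  have hinj_q : ∀ i j : ℕ, i < w → j < w →
      (i : ZMod (p * q)) * (q : ZMod (p * q)) = (j : ZMod (p * q)) * (q : ZMod (p * q)) → i = j := by
    intro i j hi hj h
    have h2 := congrArg πp h
    simp only [map_mul, map_natCast] at h2
    have h2' : (q : ZMod p) * (i : ZMod p) = (q : ZMod p) * (j : ZMod p) := by
      rw [mul_comm _ ((i : ZMod p)), mul_comm _ ((j : ZMod p))]; exact h2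
    exact hcastinjp i j hi hj (hqup.mul_left_cancel h2')
  -- codewords
  set cw : ZMod (p * q) → Finset (ZMod (p * q)) :=
    fun g => (Finset.range w).image fun k : ℕ => (k : ZMod (p * q)) * g with hcwdef
  have hdstar : ∀ g : ZMod (p * q),
      (∀ i j : ℕ, i < w → j < w → (i : ZMod (p * q)) * g = (j : ZMod (p * q)) * g → i = j) →
      ∀ x : ZMod (p * q), (x ∈ dstar (cw g) ↔ ∃ k : ℕ, 1 ≤ k ∧ k ≤ w - 1 ∧
        (x = (k : ZMod (p * q)) * g ∨ x = -((k : ZMod (p * q)) * g))) := by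
    intro g hg x
    constructor
    · intro hx
      simp only [dstar, Finset.mem_image, Finset.mem_filter, Finset.mem_product] at hx
      obtain ⟨⟨a, b⟩, ⟨⟨haI, hbI⟩, hab⟩, hxab⟩ := hx
      simp only [hcwdef, Finset.mem_image, Finset.mem_range] at haI hbI
      obtain ⟨i, hi, rfl⟩ := haI
      obtain ⟨j, hj, rfl⟩ := hbI
      have hij : i ≠ j := fun h => hab (by rw [h])
      rcases lt_or_gt_of_ne hij with hlt | hlt
      · refine ⟨j - i, by omega, by omega, Or.inr ?_⟩
        rw [← hxab]
        push_cast [Nat.cast_sub hlt.le]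
        ring
      · refine ⟨i - j, by omega, by omega, Or.inl ?_⟩
        rw [← hxab]
        push_cast [Nat.cast_sub hlt.le]
        ring
    · rintro ⟨k, hk1, hk2, hx | hx⟩
      · simp only [dstar, Finset.mem_image, Finset.mem_filter, Finset.mem_product]
        refine ⟨((k : ZMod (p * q)) * g, ((0 : ℕ) : ZMod (p * q)) * g), ⟨⟨?_, ?_⟩, ?_⟩, ?_⟩
        · simp only [hcwdef, Finset.mem_image, Finset.mem_range]
          exact ⟨k, by omega, rfl⟩
        · simp only [hcwdef, Finset.mem_image, Finset.mem_range]
          exact ⟨0, by omega, rfl⟩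
        · intro hcon
          have := hg k 0 (by omega) (by omega) hcon
          omega
        · simp [hx]
      · simp only [dstar, Finset.mem_image, Finset.mem_filter, Finset.mem_product]
        refine ⟨(((0 : ℕ) : ZMod (p * q)) * g, (k : ZMod (p * q)) * g), ⟨⟨?_, ?_⟩, ?_⟩, ?_⟩
        · simp only [hcwdef, Finset.mem_image, Finset.mem_range]
          exact ⟨0, by omega, rfl⟩
        · simp only [hcwdef, Finset.mem_image, Finset.mem_range]
          exact ⟨k, by omega, rfl⟩
        · intro hcon
          have := hg 0 k (by omega) (by omega) hcon
          omega
        · simp [hx]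
  have hcw_card : ∀ g : ZMod (p * q),
      (∀ i j : ℕ, i < w → j < w → (i : ZMod (p * q)) * g = (j : ZMod (p * q)) * g → i = j) →
      (cw g).card = w := by
    intro g hg
    rw [hcwdef]
    refine (Finset.card_image_of_injOn ?_).trans (Finset.card_range w)
    intro i hi j hj hij
    exact hg i j (Finset.mem_range.mp hi) (Finset.mem_range.mp hj) hij
  -- negation has no fixed points among units
  have hnegne : ∀ x : (ZMod (p * q))ˣ, -x ≠ x := by
    intro x hcon
    have hc : -(x : ZMod (p * q)) = (x : ZMod (p * q)) := by
      conv_lhs => rw [← Units.val_neg, hcon]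
    have h2 : (2 : ZMod (p * q)) * (x : ZMod (p * q)) = 0 := by linear_combination -hc
    have h3 : (2 : ZMod (p * q)) = 0 := (Units.mul_left_eq_zero x).mp h2
    have h4 : ((2 : ℕ) : ZMod (p * q)) = 0 := by exact_mod_cast h3
    have h5 := Nat.le_of_dvd (by omega) ((ZMod.natCast_eq_zero_iff 2 (p * q)).mp h4)
    omega
  have hnegneq : ∀ x : (ZMod q)ˣ, -x ≠ x := by
    intro x hcon
    have hc : -(x : ZMod q) = (x : ZMod q) := by
      conv_lhs => rw [← Units.val_neg, hcon]
    have h2 : (2 : ZMod q) * (x : ZMod q) = 0 := by linear_combination -hc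
    have h3 : (2 : ZMod q) = 0 := (Units.mul_left_eq_zero x).mp h2
    have h4 : ((2 : ℕ) : ZMod q) = 0 := by exact_mod_cast h3
    have h5 := Nat.le_of_dvd (by omega) ((ZMod.natCast_eq_zero_iff 2 q).mp h4)
    omega
  -- halving the subgroups
  set HF : Finset (ZMod (p * q))ˣ := Finset.univ.filter (fun x => x ∈ H) with hHFdef
  have hHFmem : ∀ x : (ZMod (p * q))ˣ, x ∈ HF ↔ x ∈ H := by
    intro x; simp [hHFdef]
  obtain ⟨SH, hSHsub, hSHcov, hSHhalf, hSHcard2⟩ := exists_half_finset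
    (fun x : (ZMod (p * q))ˣ => -x) neg_neg HF
    (fun x hx => by
      rw [hHFmem] at hx ⊢
      have := H.mul_mem hH1 hx; rwa [neg_one_mul] at this)
    (fun x _ => hnegne x)
  have hSH_H : ∀ h, h ∈ SH → h ∈ H := fun h hh => (hHFmem h).mp (hSHsub hh)
  set NF : Finset (ZMod q)ˣ := Finset.univ.filter (fun x => x ∈ N) with hNFdef
  have hNFmem : ∀ x : (ZMod q)ˣ, x ∈ NF ↔ x ∈ N := by
    intro x; simp [hNFdef]
  obtain ⟨SN, hSNsub, hSNcov, hSNhalf, hSNcard2⟩ := exists_half_finset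
    (fun x : (ZMod q)ˣ => -x) neg_neg NF
    (fun x hx => by
      rw [hNFmem] at hx ⊢
      have := N.mul_mem hN1 hx; rwa [neg_one_mul] at this)
    (fun x _ => hnegneq x)
  have hSN_N : ∀ n, n ∈ SN → n ∈ N := fun n hn => (hNFmem n).mp (hSNsub hn)
  -- cardinalities
  have hHFcard : HF.card = Nat.card H := by
    rw [hHFdef, Nat.card_eq_fintype_card, Fintype.card_subtype]
  have hNFcard : NF.card = Nat.card N := by
    rw [hNFdef, Nat.card_eq_fintype_card, Fintype.card_subtype]
  have hq1eq : q - 1 = 2 * (w - 1) * f := by omega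
  have hHcard2 : Nat.card H = 2 * ((p - 1) * f) := by
    rw [hHcard, hq1eq,
      show (p - 1) * (2 * (w - 1) * f) = (w - 1) * (2 * ((p - 1) * f)) by ring,
      Nat.mul_div_cancel_left _ (show 0 < w - 1 by omega)]
  have hNcard2 : Nat.card N = 2 * f := by
    rw [hNcard, hq1eq, show 2 * (w - 1) * f = (w - 1) * (2 * f) by ring,
      Nat.mul_div_cancel_left _ (show 0 < w - 1 by omega)]
  have hSHcard : SH.card = (p - 1) * f := by omega
  have hSNcard : SN.card = f := by omega
  -- generator sets
  set G1 : Finset (ZMod (p * q)) :=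
    SH.image (fun h : (ZMod (p * q))ˣ => (h : ZMod (p * q))) with hG1def
  set G2 : Finset (ZMod (p * q)) :=
    SN.image (fun n => (p : ZMod (p * q)) * mlift n) with hG2def
  set G3 : Finset (ZMod (p * q)) := {(q : ZMod (p * q))} with hG3def
  set Gens : Finset (ZMod (p * q)) := (G1 ∪ G2) ∪ G3 with hGensdef
  have hGmem : ∀ g : ZMod (p * q), g ∈ Gens ↔
      ((∃ h ∈ SH, ((h : (ZMod (p * q))ˣ) : ZMod (p * q)) = g) ∨
       (∃ n ∈ SN, (p : ZMod (p * q)) * mlift n = g) ∨ g = (q : ZMod (p * q))) := by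
    intro g
    simp [hGensdef, hG1def, hG2def, hG3def, Finset.mem_union, Finset.mem_image,
      Finset.mem_singleton, or_assoc]
    exact or_comm.trans or_assoc
  have hinjGens : ∀ g ∈ Gens, ∀ i j : ℕ, i < w → j < w →
      (i : ZMod (p * q)) * g = (j : ZMod (p * q)) * g → i = j := by
    intro g hg
    rcases (hGmem g).mp hg with ⟨h, hh, rfl⟩ | ⟨n, hn, rfl⟩ | rfl
    · exact hinj_unit _ h.isUnit
    · exact hinj_p n
    · exact hinj_q
  -- type lemmas
  have htype1 : ∀ h : (ZMod (p * q))ˣ, ∀ x ∈ dstar (cw (h : ZMod (p * q))), IsUnit x := by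
    intro h x hx
    rw [hdstar _ (hinj_unit _ h.isUnit)] at hx
    obtain ⟨k, hk1, hk2, hx | hx⟩ := hx
    · rw [hx]; exact (hkunit k hk1 hk2).mul h.isUnit
    · rw [hx]; exact ((hkunit k hk1 hk2).mul h.isUnit).neg
  have htype2 : ∀ n : (ZMod q)ˣ, ∀ x ∈ dstar (cw ((p : ZMod (p * q)) * mlift n)),
      πp x = 0 ∧ πq x ≠ 0 := by
    intro n x hx
    rw [hdstar _ (hinj_p n)] at hx
    obtain ⟨k, hk1, hk2, hx | hx⟩ := hx
    · rw [hx]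
      refine ⟨by rw [map_mul, hπpml, mul_zero], ?_⟩
      rw [map_mul, map_natCast, hπqml]
      exact mul_ne_zero (hkunitq k hk1 hk2).ne_zero (mul_ne_zero hpq0 n.isUnit.ne_zero)
    · rw [hx]
      refine ⟨by rw [map_neg, map_mul, hπpml, mul_zero, neg_zero], ?_⟩
      rw [map_neg, map_mul, map_natCast, hπqml]
      exact neg_ne_zero.mpr
        (mul_ne_zero (hkunitq k hk1 hk2).ne_zero (mul_ne_zero hpq0 n.isUnit.ne_zero))
  have htype3 : ∀ x ∈ dstar (cw ((q : ZMod (p * q)))), πq x = 0 ∧ πp x ≠ 0 := by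
    intro x hx
    rw [hdstar _ hinj_q] at hx
    obtain ⟨k, hk1, hk2, hx | hx⟩ := hx
    · rw [hx]
      refine ⟨by rw [map_mul, map_natCast, map_natCast, ZMod.natCast_self, mul_zero], ?_⟩
      rw [map_mul, map_natCast, map_natCast]
      exact mul_ne_zero (hkunitp k hk1 hk2) hqp
    · rw [hx]
      refine ⟨by rw [map_neg, map_mul, map_natCast, map_natCast, ZMod.natCast_self,
        mul_zero, neg_zero], ?_⟩
      rw [map_neg, map_mul, map_natCast, map_natCast]
      exact neg_ne_zero.mpr (mul_ne_zero (hkunitp k hk1 hk2) hqp)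
  -- uniqueness within families
  have huniq1 : ∀ h ∈ SH, ∀ h' ∈ SH, ∀ x : ZMod (p * q),
      x ∈ dstar (cw (h : ZMod (p * q))) → x ∈ dstar (cw ((h' : (ZMod (p * q))ˣ) : ZMod (p * q)))
      → h = h' := by
    intro h hh h' hh' x hx hx'
    rw [hdstar _ (hinj_unit _ h.isUnit)] at hx
    rw [hdstar _ (hinj_unit _ h'.isUnit)] at hx'
    obtain ⟨k, hk1, hk2, hx⟩ := hx
    obtain ⟨k', hk1', hk2', hx'⟩ := hx'
    have heq : (k : ZMod (p * q)) * h = (k' : ZMod (p * q)) * h' ∨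
        (k : ZMod (p * q)) * h = -((k' : ZMod (p * q)) * h') := by
      rcases hx with hx | hx <;> rcases hx' with hx' | hx'
      · exact Or.inl (by rw [← hx, hx'])
      · exact Or.inr (by rw [← hx, hx'])
      · refine Or.inr ?_
        have h1 : -((k : ZMod (p * q)) * h) = (k' : ZMod (p * q)) * h' := by rw [← hx, hx']
        rw [← h1, neg_neg]
      · refine Or.inl (neg_injective ?_)
        rw [← hx, hx']
    have hne : h' ≠ -h := fun hcon => hSHhalf h hh (hcon ▸ hh')
    exact (sdr_main H hH1 hHSDR hk1 hk2 hk1' hk2' (hkunit k hk1 hk2)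
      (hSH_H h hh) (hSH_H h' hh') hne heq).2
  have huniq2 : ∀ n ∈ SN, ∀ n' ∈ SN, ∀ x : ZMod (p * q),
      x ∈ dstar (cw ((p : ZMod (p * q)) * mlift n)) →
      x ∈ dstar (cw ((p : ZMod (p * q)) * mlift n')) → n = n' := by
    intro n hn n' hn' x hx hx'
    rw [hdstar _ (hinj_p n)] at hx
    rw [hdstar _ (hinj_p n')] at hx'
    obtain ⟨k, hk1, hk2, hx⟩ := hx
    obtain ⟨k', hk1', hk2', hx'⟩ := hx'
    have e1 : πq x = (k : ZMod q) * ((p : ZMod q) * (n : ZMod q)) ∨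
        πq x = -((k : ZMod q) * ((p : ZMod q) * (n : ZMod q))) := by
      rcases hx with hx | hx
      · left; rw [hx, map_mul, map_natCast, hπqml]
      · right; rw [hx, map_neg, map_mul, map_natCast, hπqml]
    have e2 : πq x = (k' : ZMod q) * ((p : ZMod q) * (n' : ZMod q)) ∨
        πq x = -((k' : ZMod q) * ((p : ZMod q) * (n' : ZMod q))) := by
      rcases hx' with hx' | hx'
      · left; rw [hx', map_mul, map_natCast, hπqml]
      · right; rw [hx', map_neg, map_mul, map_natCast, hπqml]
    have heq0 : (k : ZMod q) * ((p : ZMod q) * (n : ZMod q))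
          = (k' : ZMod q) * ((p : ZMod q) * (n' : ZMod q)) ∨
        (k : ZMod q) * ((p : ZMod q) * (n : ZMod q))
          = -((k' : ZMod q) * ((p : ZMod q) * (n' : ZMod q))) := by
      rcases e1 with e1 | e1 <;> rcases e2 with e2 | e2
      · exact Or.inl (by rw [← e1, e2])
      · exact Or.inr (by rw [← e1, e2])
      · refine Or.inr ?_
        have h1 : -((k : ZMod q) * ((p : ZMod q) * (n : ZMod q)))
            = (k' : ZMod q) * ((p : ZMod q) * (n' : ZMod q)) := by rw [← e1, e2]
        rw [← h1, neg_neg]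
      · refine Or.inl (neg_injective ?_)
        rw [← e1, e2]
    have heq : (k : ZMod q) * (n : ZMod q) = (k' : ZMod q) * (n' : ZMod q) ∨
        (k : ZMod q) * (n : ZMod q) = -((k' : ZMod q) * (n' : ZMod q)) := by
      rcases heq0 with h0 | h0
      · left
        apply hpuq.mul_left_cancel
        calc (p : ZMod q) * ((k : ZMod q) * (n : ZMod q))
            = (k : ZMod q) * ((p : ZMod q) * (n : ZMod q)) := by ring
          _ = (k' : ZMod q) * ((p : ZMod q) * (n' : ZMod q)) := h0
          _ = (p : ZMod q) * ((k' : ZMod q) * (n' : ZMod q)) := by ring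
      · right
        apply hpuq.mul_left_cancel
        calc (p : ZMod q) * ((k : ZMod q) * (n : ZMod q))
            = (k : ZMod q) * ((p : ZMod q) * (n : ZMod q)) := by ring
          _ = -((k' : ZMod q) * ((p : ZMod q) * (n' : ZMod q))) := h0
          _ = (p : ZMod q) * (-((k' : ZMod q) * (n' : ZMod q))) := by ring
    have hne : n' ≠ -n := fun hcon => hSNhalf n hn (hcon ▸ hn')
    exact (sdr_main N hN1 hNSDR hk1 hk2 hk1' hk2' (hkunitq k hk1 hk2)
      (hSN_N n hn) (hSN_N n' hn') hne heq).2
  -- coverage lemmas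
  have hcov1 : ∀ x : ZMod (p * q), IsUnit x →
      ∃ h ∈ SH, x ∈ dstar (cw ((h : (ZMod (p * q))ˣ) : ZMod (p * q))) := by
    intro x hx
    obtain ⟨j, ⟨hj1, hj2, h0, hh0, hxu⟩, _⟩ := hHSDR hx.unit
    rw [hx.unit_spec] at hxu
    rcases hSHcov h0 ((hHFmem h0).mpr hh0) with hmem | hmem
    · refine ⟨h0, hmem, ?_⟩
      rw [hdstar _ (hinj_unit _ h0.isUnit)]
      exact ⟨j, hj1, hj2, Or.inl hxu⟩
    · refine ⟨-h0, hmem, ?_⟩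
      rw [hdstar _ (hinj_unit _ (-h0).isUnit)]
      refine ⟨j, hj1, hj2, Or.inr ?_⟩
      rw [Units.val_neg, mul_neg, neg_neg]
      exact hxu
  have hcov2 : ∀ x : ZMod (p * q), x ≠ 0 → πp x = 0 →
      ∃ n ∈ SN, x ∈ dstar (cw ((p : ZMod (p * q)) * mlift n)) := by
    intro x hx0 hxp
    obtain ⟨c, hc⟩ := (hπp0 x).mp hxp
    have hcq : c < q := by
      have hlt := ZMod.val_lt x
      rw [hc] at hlt
      exact lt_of_mul_lt_mul_left hlt (Nat.zero_le p)
    have hc0 : c ≠ 0 := by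
      rintro rfl
      apply hx0
      rw [← ZMod.natCast_zmod_val x, hc]; simp
    have hcu : IsUnit (c : ZMod q) := (ZMod.isUnit_iff_coprime c q).mpr
      (((Nat.Prime.coprime_iff_not_dvd hq).mpr
        (fun hd => absurd (Nat.le_of_dvd (by omega) hd) (by omega))).symm)
    obtain ⟨j, ⟨hj1, hj2, n0, hn0, hcn⟩, _⟩ := hNSDR hcu.unit
    rw [hcu.unit_spec] at hcn
    have key : ∀ B : ℤ, ((c : ℤ) : ZMod q) = (B : ZMod q) →
        x = (((p : ℤ) * B : ℤ) : ZMod (p * q)) := by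
      intro B hB
      have hx' : x = (((p : ℤ) * (c : ℤ) : ℤ) : ZMod (p * q)) := by
        rw [← ZMod.natCast_zmod_val x, hc]; push_cast; ring
      rw [hx']
      exact (hmodq (c : ℤ) B).mpr hB
    rcases hSNcov n0 ((hNFmem n0).mpr hn0) with hmem | hmem
    · refine ⟨n0, hmem, ?_⟩
      rw [hdstar _ (hinj_p n0)]
      refine ⟨j, hj1, hj2, Or.inl ?_⟩
      have hB : ((c : ℤ) : ZMod q)
          = (((j : ℤ) * (((n0 : (ZMod q)ˣ) : ZMod q).val : ℤ) : ℤ) : ZMod q) := by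
        push_cast [ZMod.natCast_zmod_val]
        exact hcn
      have hkx := key _ hB
      rw [hkx]
      simp only [hmldef]
      push_cast
      ring
    · refine ⟨-n0, hmem, ?_⟩
      rw [hdstar _ (hinj_p (-n0))]
      refine ⟨j, hj1, hj2, Or.inr ?_⟩
      have hB : ((c : ℤ) : ZMod q)
          = ((-((j : ℤ) * ((((-n0 : (ZMod q)ˣ)) : ZMod q).val : ℤ)) : ℤ) : ZMod q) := by
        push_cast [ZMod.natCast_zmod_val, Units.val_neg]
        rw [hcn]; ring
      have hkx := key _ hB
      rw [hkx]
      simp only [hmldef]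
      push_cast
      ring
  have hcov3 : ∀ x : ZMod (p * q), x ≠ 0 → πq x = 0 →
      x ∈ dstar (cw ((q : ZMod (p * q)))) := by
    intro x hx0 hxq
    obtain ⟨c, hc⟩ := (hπq0 x).mp hxq
    have hcp : c < p := by
      have hlt := ZMod.val_lt x
      rw [hc, Nat.mul_comm p q] at hlt
      exact lt_of_mul_lt_mul_left hlt (Nat.zero_le q)
    have hc0 : c ≠ 0 := by
      rintro rfl; apply hx0; rw [← ZMod.natCast_zmod_val x, hc]; simp
    have hzpq : (p : ZMod (p * q)) * (q : ZMod (p * q)) = 0 := by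
      have h1 := ZMod.natCast_self (p * q); push_cast at h1; exact h1
    rw [hdstar _ hinj_q]
    by_cases hcle : c ≤ w - 1
    · refine ⟨c, by omega, hcle, Or.inl ?_⟩
      rw [← ZMod.natCast_zmod_val x, hc]; push_cast; ring
    · refine ⟨p - c, by omega, by omega, Or.inr ?_⟩
      rw [← ZMod.natCast_zmod_val x, hc, Nat.cast_sub (by omega : c ≤ p)]
      push_cast
      linear_combination hzpq
  -- self membership
  have hself : ∀ g ∈ Gens, g ∈ dstar (cw g) := by
    intro g hg
    rw [hdstar g (hinjGens g hg)]
    exact ⟨1, le_refl 1, hw1, Or.inl (by push_cast; ring)⟩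
  -- key disjointness
  have hkey : ∀ g ∈ Gens, ∀ g' ∈ Gens, g ≠ g' → Disjoint (dstar (cw g)) (dstar (cw g')) := by
    intro g hg g' hg' hne
    rw [Finset.disjoint_left]
    intro x hx hx'
    rcases (hGmem g).mp hg with ⟨h, hh, rfl⟩ | ⟨n, hn, rfl⟩ | rfl <;>
      rcases (hGmem g').mp hg' with ⟨h', hh', rfl⟩ | ⟨n', hn', rfl⟩ | rfl
    · exact hne (by rw [huniq1 h hh h' hh' x hx hx'])
    · exact absurd (htype2 n' x hx').1 (hunit_to x (htype1 h x hx)).1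
    · exact absurd (htype3 x hx').1 (hunit_to x (htype1 h x hx)).2
    · exact absurd (htype2 n x hx).1 (hunit_to x (htype1 h' x hx')).1
    · exact hne (by rw [huniq2 n hn n' hn' x hx hx'])
    · exact absurd (htype3 x hx').1 (htype2 n x hx).2
    · exact absurd (htype3 x hx).1 (hunit_to x (htype1 h' x hx')).2
    · exact absurd (htype2 n' x hx').1 (htype3 x hx).2
    · exact hne rfl
  -- the code
  set C : Finset (Finset (ZMod (p * q))) := Gens.image cw with hCdef
  have hcwinj : ∀ g ∈ Gens, ∀ g' ∈ Gens, cw g = cw g' → g = g' := by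
    intro g hg g' hg' he
    by_contra hne
    have hd := hkey g hg g' hg' hne
    have h1 := hself g hg
    have h2 : g ∈ dstar (cw g') := by rw [← he]; exact h1
    exact (Finset.disjoint_left.mp hd h1) h2
  refine ⟨C, ?_, ?_, ?_, ?_⟩
  · rw [hCdef, Finset.card_image_of_injOn (fun g hg g' hg' => hcwinj g hg g' hg')]
    have hd12 : Disjoint G1 G2 := by
      rw [Finset.disjoint_left]
      intro g hg1 hg2
      rw [hG1def, Finset.mem_image] at hg1
      rw [hG2def, Finset.mem_image] at hg2
      obtain ⟨h, hh, rfl⟩ := hg1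
      obtain ⟨n, hn, heq⟩ := hg2
      have hu := (hunit_to _ h.isUnit).1
      rw [← heq] at hu
      exact hu (hπpml n)
    have hd13 : Disjoint G1 G3 := by
      rw [Finset.disjoint_left]
      intro g hg1 hg3
      rw [hG1def, Finset.mem_image] at hg1
      rw [hG3def, Finset.mem_singleton] at hg3
      obtain ⟨h, hh, rfl⟩ := hg1
      have hu := (hunit_to _ h.isUnit).2
      rw [hg3] at hu
      apply hu
      rw [map_natCast]
      exact ZMod.natCast_self q
    have hd23 : Disjoint G2 G3 := by
      rw [Finset.disjoint_left]
      intro g hg2 hg3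
      rw [hG2def, Finset.mem_image] at hg2
      rw [hG3def, Finset.mem_singleton] at hg3
      obtain ⟨n, hn, rfl⟩ := hg2
      have h1 := hπqml n
      rw [hg3, map_natCast, ZMod.natCast_self] at h1
      exact (mul_ne_zero hpq0 n.isUnit.ne_zero) h1.symm
    rw [hGensdef,
      Finset.card_union_of_disjoint (by rw [Finset.disjoint_union_left]; exact ⟨hd13, hd23⟩),
      Finset.card_union_of_disjoint hd12]
    have hc1 : G1.card = (p - 1) * f := by
      rw [hG1def, Finset.card_image_of_injOn (fun a _ b _ e => Units.ext e), hSHcard]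
    have hc2 : G2.card = f := by
      rw [hG2def, Finset.card_image_of_injOn ?_, hSNcard]
      intro a _ b _ e
      have e' : (((p : ℤ) * (((a : (ZMod q)ˣ) : ZMod q).val : ℤ) : ℤ) : ZMod (p * q))
          = (((p : ℤ) * (((b : (ZMod q)ˣ) : ZMod q).val : ℤ) : ℤ) : ZMod (p * q)) := by
        simp only [hmldef] at e
        push_cast
        exact e
      have h2 := (hmodq _ _).mp e'
      push_cast [ZMod.natCast_zmod_val] at h2
      exact Units.ext h2
    have hc3 : G3.card = 1 := by rw [hG3def]; exact Finset.card_singleton _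
    rw [hc1, hc2, hc3]
    have h1 := Nat.sub_one_mul p f
    have h2 : f ≤ p * f := Nat.le_mul_of_pos_left f (by omega)
    omega
  · intro I hI
    rw [hCdef, Finset.mem_image] at hI
    obtain ⟨g, hg, rfl⟩ := hI
    exact ⟨hcw_card g (hinjGens g hg), g, by rw [hcwdef]⟩
  · intro I hI J hJ hne
    rw [hCdef, Finset.mem_image] at hI hJ
    obtain ⟨g, hg, rfl⟩ := hI
    obtain ⟨g', hg', rfl⟩ := hJ
    exact hkey g hg g' hg' (fun h => hne (by rw [h]))
  · ext x
    simp only [Finset.mem_biUnion, Finset.mem_sdiff, Finset.mem_univ, Finset.mem_singleton,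
      true_and]
    constructor
    · rintro ⟨I, hI, hxI⟩
      rw [hCdef, Finset.mem_image] at hI
      obtain ⟨g, hg, rfl⟩ := hI
      rcases (hGmem g).mp hg with ⟨h, hh, rfl⟩ | ⟨n, hn, rfl⟩ | rfl
      · intro h0
        exact (hunit_to x (htype1 h x hxI)).1 (by rw [h0, map_zero])
      · intro h0
        exact (htype2 n x hxI).2 (by rw [h0, map_zero])
      · intro h0
        exact (htype3 x hxI).2 (by rw [h0, map_zero])
    · intro hx0
      by_cases h1 : πp x = 0
      · obtain ⟨n, hn, hmem⟩ := hcov2 x hx0 h1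
        refine ⟨cw ((p : ZMod (p * q)) * mlift n), ?_, hmem⟩
        rw [hCdef]
        exact Finset.mem_image_of_mem cw ((hGmem _).mpr (Or.inr (Or.inl ⟨n, hn, rfl⟩)))
      by_cases h2 : πq x = 0
      · refine ⟨cw ((q : ZMod (p * q))), ?_, hcov3 x hx0 h2⟩
        rw [hCdef]
        exact Finset.mem_image_of_mem cw ((hGmem _).mpr (Or.inr (Or.inr rfl)))
      · obtain ⟨h, hh, hmem⟩ := hcov1 x (hunit_of x h1 h2)
        refine ⟨cw ((h : (ZMod (p * q))ˣ) : ZMod (p * q)), ?_, hmem⟩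
        rw [hCdef]
        exact Finset.mem_image_of_mem cw ((hGmem _).mpr (Or.inl ⟨h, hh, rfl⟩))
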